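/- Every bitstring of length 2k+1 with exactly k ones can be written uniquely as σ^i(y·0), where y is a Dyck word of length 2k, 0 ≤ i < 2k+1, and σ^i denotes cyclic left shift by i positions. -/

import Mathlib

/-- A Dyck word of length `2*k`: a bitstring with `k` ones (`true`) and `k` zeros (`false`)
such that every prefix contains at least as many ones as zeros. -/
def IsDyckWord (k : ℕ) (l : List Bool) : Prop :=
  l.length = 2 * k ∧ l.count true = k ∧
    ∀ m : ℕ, (l.take m).count false ≤ (l.take m).count true

namespace UDRaux

/-- The balance (#zeros minus #ones) of a bitstring. -/
def bal (l : List Bool) : ℤ := (l.count false : ℤ) - l.count true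

lemma bal_append (a b : List Bool) : bal (a ++ b) = bal a + bal b := by
  simp [bal, List.count_append]; ring

lemma count_add (l : List Bool) : l.count true + l.count false = l.length :=
  List.count_true_add_count_false l

/-- Balance of prefixes of a rotation, in terms of balance of prefixes of the original. -/
lemma bal_rotate_take (x : List Bool) {n r m : ℕ} (hn : x.length = n) (hr : r ≤ n)
    (hm : m ≤ n) :
    bal ((x.rotate r).take m) =
      if r + m ≤ n then bal (x.take (r + m)) - bal (x.take r)
      else bal x - bal (x.take r) + bal (x.take (r + m - n)) := by
  have hrot : x.rotate r = x.drop r ++ x.take r :=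
    List.rotate_eq_drop_append_take (by omega)
  have hdlen : (x.drop r).length = n - r := by simp [hn]
  by_cases h : r + m ≤ n
  · rw [if_pos h, hrot, List.take_append_of_le_length (by omega)]
    have : x.take (r + m) = x.take r ++ (x.drop r).take m := List.take_add
    rw [this, bal_append]; ring
  · rw [if_neg h, hrot, List.take_append,
      List.take_of_length_le (by omega), List.take_take, hdlen]
    have h1 : (m - (n - r)) ⊓ r = r + m - n := by omega
    rw [h1, bal_append]
    have h2 : bal x = bal (x.take r) + bal (x.drop r) := by
      conv_lhs => rw [← List.take_append_drop r x]
      exact bal_append _ _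
    rw [h2]; ring

theorem unique_dyck_rotation' (k : ℕ) (x : List Bool)
    (hlen : x.length = 2 * k + 1) (hones : x.count true = k) :
    ∃! p : List Bool × ℕ, p.2 < 2 * k + 1 ∧ IsDyckWord k p.1 ∧
      x = (p.1 ++ [false]).rotate p.2 := by
  set n := 2 * k + 1 with hn
  have hzeros : x.count false = k + 1 := by have := count_add x; omega
  have hbalx : bal x = 1 := by rw [bal, hones, hzeros]; push_cast; ring
  set f : ℕ → ℤ := fun j => bal (x.take j) with hf
  have hf0 : f 0 = 0 := by simp [hf, bal]
  have hfn : f n = 1 := by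
    rw [hf]; simp only; rw [List.take_of_length_le (by omega)]; exact hbalx
  -- the condition for rotation r to give a Dyck word followed by a zero
  set C : ℕ → Prop := fun r => ∀ m ≤ 2 * k, bal ((x.rotate r).take m) ≤ 0 with hC
  -- "first argmax" characterization
  set Q : ℕ → Prop := fun r =>
    (∀ j < r, f j < f r) ∧ ∀ j, r ≤ j → j ≤ 2 * k → f j ≤ f r with hQ
  have hCQ : ∀ r < n, (C r ↔ Q r) := by
    intro r hrn
    constructor
    · intro hc
      constructor
      · intro j hj
        rcases Nat.eq_zero_or_pos j with hj0 | hj0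
        · -- f r ≥ 1 using m = n - r
          have h1 := hc (n - r) (by omega)
          rw [bal_rotate_take x hlen (by omega) (by omega), if_pos (by omega)] at h1
          have : r + (n - r) = n := by omega
          rw [this] at h1
          rw [hj0, hf0]
          have e1 : f n = bal (List.take n x) := rfl
          have e2 : f r = bal (List.take r x) := rfl
          omega
        · have h1 := hc (n - r + j) (by omega)
          rw [bal_rotate_take x hlen (by omega) (by omega), if_neg (by omega)] at h1
          have h2 : r + (n - r + j) - n = j := by omega
          rw [h2, hbalx] at h1
          have e1 : f j = bal (List.take j x) := rfl
          have e2 : f r = bal (List.take r x) := rfl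
          omega
      · intro j hrj hj2k
        have h1 := hc (j - r) (by omega)
        rw [bal_rotate_take x hlen (by omega) (by omega), if_pos (by omega)] at h1
        have : r + (j - r) = j := by omega
        rw [this] at h1
        have e1 : f j = bal (List.take j x) := rfl
        have e2 : f r = bal (List.take r x) := rfl
        omega
    · intro hq m hm
      rw [bal_rotate_take x hlen (by omega) (by omega)]
      by_cases h : r + m ≤ n
      · rw [if_pos h]
        rcases Nat.lt_or_ge (r + m) n with h2 | h2
        · have := hq.2 (r + m) (by omega) (by omega)
          have e1 : f (r + m) = bal (List.take (r + m) x) := rfl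
          have e2 : f r = bal (List.take r x) := rfl
          omega
        · have hrm : r + m = n := by omega
          have hr1 : 0 < r := by omega
          have := hq.1 0 hr1
          rw [hrm]
          have e1 : f n = bal (List.take n x) := rfl
          have e2 : f r = bal (List.take r x) := rfl
          omega
      · rw [if_neg h, hbalx]
        have := hq.1 (r + m - n) (by omega)
        have e1 : f (r + m - n) = bal (List.take (r + m - n) x) := rfl
        have e2 : f r = bal (List.take r x) := rfl
        omega
  -- existence and uniqueness of r with Q r
  have hexQ : ∃ j, j ≤ 2 * k ∧ ∀ j' ≤ 2 * k, f j' ≤ f j := by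
    obtain ⟨j, hj, hjmax⟩ := Finset.exists_max_image (Finset.range (2 * k + 1)) f
      ⟨0, Finset.mem_range.mpr (by omega)⟩
    have hj' := Finset.mem_range.mp hj
    exact ⟨j, by omega, fun j' hj'' => hjmax j' (Finset.mem_range.mpr (by omega))⟩
  set r := Nat.find hexQ with hrdef
  obtain ⟨hr2k, hrmax⟩ := Nat.find_spec hexQ
  have hQr : Q r := by
    constructor
    · intro j hj
      by_contra hcon
      push_neg at hcon
      exact Nat.find_min hexQ hj ⟨by omega, fun j' hj' => le_trans (hrmax j' hj') hcon⟩
    · intro j _ hj2k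
      exact hrmax j hj2k
  have hrn : r < n := by omega
  have hCr : C r := (hCQ r hrn).mpr hQr
  -- uniqueness of r
  have hQuniq : ∀ r1 r2, r1 < n → r2 < n → Q r1 → Q r2 → r1 = r2 := by
    intro r1 r2 h1 h2 hq1 hq2
    rcases lt_trichotomy r1 r2 with h | h | h
    · have := hq2.1 r1 h
      have := hq1.2 r2 (by omega) (by omega)
      omega
    · exact h
    · have := hq1.1 r2 h
      have := hq2.2 r1 (by omega) (by omega)
      omega
  -- decompose w = x.rotate r as y ++ [false]
  set w := x.rotate r with hwdef
  have hwlen : w.length = n := by rw [hwdef, List.length_rotate, hlen]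
  have hwct : w.count true = k := by
    rw [hwdef, (List.rotate_perm x r).count_eq, hones]
  have hwcf : w.count false = k + 1 := by have := count_add w; omega
  have hbalw : bal w = 1 := by rw [bal, hwct, hwcf]; push_cast; ring
  set y := w.take (2 * k) with hydef
  have hylen : y.length = 2 * k := by rw [hydef, List.length_take]; omega
  have hwget : w[2 * k]? = some w[2 * k] := List.getElem?_eq_getElem (by omega)
  have hwtake : w = y ++ [w[2 * k]] := by
    conv_lhs => rw [← List.take_of_length_le (le_of_eq hwlen), hn, List.take_succ]
    rw [hwget]; rfl
  have hbaly0 : bal y ≤ 0 := hCr (2 * k) le_rfl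
  have hbt : bal [true] = -1 := by simp [bal]
  have hbf : bal [false] = 1 := by simp [bal]
  have hlast : w[2 * k] = false ∧ bal y = 0 := by
    have := bal_append y [w[2 * k]]
    rw [← hwtake, hbalw] at this
    cases hb : w[2 * k] with
    | true => rw [hb, hbt] at this; omega
    | false => rw [hb, hbf] at this; exact ⟨rfl, by omega⟩
  have hw_eq : w = y ++ [false] := by rw [hwtake, hlast.1]
  have hyct : y.count true = k := by
    have h1 := count_add y
    have h2 := hlast.2
    rw [bal] at h2
    omega
  have hyDyck : IsDyckWord k y := by
    refine ⟨hylen, hyct, fun m => ?_⟩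
    have h1 : y.take m = w.take (m ⊓ (2 * k)) := by rw [hydef, List.take_take]
    have h2 := hCr (m ⊓ (2 * k)) (by omega)
    rw [← h1, bal] at h2
    omega
  set i := (n - r) % n with hidef
  have hin : i < n := Nat.mod_lt _ (by omega)
  have hrot_eq : x = (y ++ [false]).rotate i := by
    rw [← hw_eq, hwdef, hidef]
    have hlr : (x.rotate r).length = n := hwlen
    rw [← hlr, List.rotate_mod, hlr, List.rotate_rotate]
    have : r + (n - r) = n := by omega
    rw [this, ← hlen, List.rotate_length]
  refine ⟨(y, i), ⟨hin, hyDyck, hrot_eq⟩, ?_⟩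
  -- uniqueness
  rintro ⟨y', i'⟩ ⟨hi'n, hy'Dyck, hx'⟩
  dsimp only at hi'n hy'Dyck hx' ⊢
  set r' := (n - i') % n with hr'def
  have hr'n : r' < n := Nat.mod_lt _ (by omega)
  have hy'len : (y' ++ [false]).length = n := by
    simp [hy'Dyck.1]; omega
  have hri' : i' + r' = 0 ∨ i' + r' = n := by
    rcases Nat.eq_zero_or_pos i' with h | h
    · left; rw [hr'def, h]; simp
    · right; rw [hr'def, Nat.mod_eq_of_lt (by omega)]; omega
  have hw' : x.rotate r' = y' ++ [false] := by
    rw [hx', List.rotate_rotate]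
    rcases hri' with h | h
    · rw [h, List.rotate_zero]
    · rw [h, ← hy'len, List.rotate_length]
  have hCr' : C r' := by
    intro m hm
    rw [hw', List.take_append_of_le_length (by rw [hy'Dyck.1]; omega)]
    have := hy'Dyck.2.2 m
    rw [bal]; omega
  have hr'r : r' = r := hQuniq r' r hr'n hrn ((hCQ r' hr'n).mp hCr') hQr
  have hww' : y' ++ [false] = y ++ [false] := by rw [← hw', hr'r, ← hwdef, hw_eq]
  have hy'y : y' = y := by
    have := List.append_inj_left' hww' (by rfl)
    exact this
  have hi'i : i' = i := by
    rcases Nat.eq_zero_or_pos i' with h | h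
    · rw [hidef, ← hr'r, hr'def, h]; simp
    · have h2 : r' = n - i' := by rw [hr'def]; exact Nat.mod_eq_of_lt (by omega)
      rw [hidef, ← hr'r, h2]
      have h1 : n - (n - i') = i' := by omega
      rw [h1, Nat.mod_eq_of_lt hi'n]
  rw [Prod.mk.injEq]
  exact ⟨hy'y, hi'i⟩

end UDRaux

/-- Every bitstring of length `2*k+1` with exactly `k` ones is uniquely `σ^i(y·0)` with
`y` a Dyck word of length `2*k` and `0 ≤ i < 2*k+1`; `σ^i` is cyclic left shift
(`List.rotate`). -/
theorem unique_dyck_rotation (k : ℕ) (x : List Bool)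
    (hlen : x.length = 2 * k + 1) (hones : x.count true = k) :
    ∃! p : List Bool × ℕ, p.2 < 2 * k + 1 ∧ IsDyckWord k p.1 ∧
      x = (p.1 ++ [false]).rotate p.2 := by
  exact UDRaux.unique_dyck_rotation' k x hlen hones
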